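/- Let v : S¹ × [0, t̄] → ℝ be a C² solution of v_t = ψ v_ss + a(s,v,v_s), where ψ ≥ C̃ > 0, and suppose a(s,v,0) ≤ α|v| + β/|v| for positive constants α, β whenever v ≠ 0. Then sup_{S¹×[0,t̄]} v ≤ e^{(α+1)t̄}(√β + sup_{S¹} v⁺(·,0)). -/

import Mathlib

/-- Partial derivative in the first (space) variable. -/
noncomputable def parx {E : Type*} [NormedAddCommGroup E] [NormedSpace ℝ E]
    (f : ℝ → ℝ → E) (x t : ℝ) : E := deriv (fun y => f y t) x

/-- Partial derivative in the second (time) variable. -/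
noncomputable def partt {E : Type*} [NormedAddCommGroup E] [NormedSpace ℝ E]
    (f : ℝ → ℝ → E) (x t : ℝ) : E := deriv (fun s => f x s) t

/-- Arclength derivative along the curve u: ∂ₛ f = ∂ₓ f / |uₓ|. -/
noncomputable def arcd {E : Type*} [NormedAddCommGroup E] [NormedSpace ℝ E]
    (u : ℝ → ℝ → ℝ × ℝ) (f : ℝ → ℝ → E) (x t : ℝ) : E := (‖parx u x t‖)⁻¹ • parx f x t

open Filter Set Real Topology

/-- At a max over `[0,t0]` attained at the right endpoint `t0 > 0`, the derivative is ≥ 0. -/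
lemma aux_deriv_nonneg {g : ℝ → ℝ} {g' t0 : ℝ} (hg : HasDerivAt g g' t0)
    (ht0 : 0 < t0) (hmax : ∀ t ∈ Set.Icc (0:ℝ) t0, g t ≤ g t0) : 0 ≤ g' := by
  have hs : Tendsto (slope g t0) (𝓝[<] t0) (𝓝 g') :=
    (hasDerivAt_iff_tendsto_slope.mp hg).mono_left
      (nhdsWithin_mono _ (fun x hx => ne_of_lt hx))
  refine ge_of_tendsto hs ?_
  filter_upwards [Ioo_mem_nhdsLT_of_mem (⟨ht0, le_rfl⟩ : t0 ∈ Set.Ioc 0 t0)] with t ht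
  have h1 : g t ≤ g t0 := hmax t ⟨ht.1.le, ht.2.le⟩
  have h2 : t - t0 < 0 := by linarith [ht.2]
  rw [slope_def_field]
  exact div_nonneg_iff.2 (Or.inr ⟨by linarith, h2.le⟩)

/-- At a global max of a C² function, the second derivative is ≤ 0. -/
lemma aux_second_deriv_nonpos {f : ℝ → ℝ} {s0 : ℝ} (hf : Differentiable ℝ f)
    (hf' : DifferentiableAt ℝ (deriv f) s0) (hmax : ∀ s, f s ≤ f s0) :
    deriv (deriv f) s0 ≤ 0 := by
  have hd0 : deriv f s0 = 0 :=
    (IsLocalMax.deriv_eq_zero (Filter.Eventually.of_forall (fun s => hmax s)))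
  have key : ∀ n : ℕ, ∃ c ∈ Set.Ioo s0 (s0 + 1/((n:ℝ)+1)),
      deriv f c = (f (s0 + 1/((n:ℝ)+1)) - f s0) / ((s0 + 1/((n:ℝ)+1)) - s0) := by
    intro n
    have hlt : s0 < s0 + 1/((n:ℝ)+1) := lt_add_of_pos_right _ (by positivity)
    exact exists_hasDerivAt_eq_slope f (deriv f) hlt hf.continuous.continuousOn
      (fun x _ => (hf x).hasDerivAt)
  choose c hc hceq using key
  have hc1 : ∀ n, s0 < c n := fun n => (hc n).1
  have hcle : ∀ n, deriv f (c n) ≤ 0 := by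
    intro n
    rw [hceq n]
    have hnum : f (s0 + 1/((n:ℝ)+1)) - f s0 ≤ 0 := by linarith [hmax (s0 + 1/((n:ℝ)+1))]
    have hden : (0:ℝ) < (s0 + 1/((n:ℝ)+1)) - s0 := by
      have : (0:ℝ) < 1/((n:ℝ)+1) := by positivity
      linarith
    exact div_nonpos_of_nonpos_of_nonneg hnum hden.le
  have hct : Tendsto c atTop (𝓝[≠] s0) := by
    rw [tendsto_nhdsWithin_iff]
    constructor
    · have h1 : Tendsto (fun n : ℕ => s0 + 1/((n:ℝ)+1)) atTop (𝓝 s0) := by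
        have := tendsto_one_div_add_atTop_nhds_zero_nat (𝕜 := ℝ)
        have := (tendsto_const_nhds (x := s0) (f := atTop (α := ℕ))).add this
        simpa using this
      exact tendsto_of_tendsto_of_tendsto_of_le_of_le tendsto_const_nhds h1
        (fun n => (hc1 n).le) (fun n => (hc n).2.le)
    · exact Filter.Eventually.of_forall (fun n => (hc1 n).ne')
  have hslope : Tendsto (fun n => slope (deriv f) s0 (c n)) atTop (𝓝 (deriv (deriv f) s0)) :=
    (hasDerivAt_iff_tendsto_slope.mp hf'.hasDerivAt).comp hct
  refine le_of_tendsto hslope ?_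
  refine Filter.Eventually.of_forall (fun n => ?_)
  rw [slope_def_field, hd0, sub_zero]
  exact div_nonpos_of_nonpos_of_nonneg (hcle n) (by linarith [hc1 n])

/-- Maximum principle: if v solves v_t = ψ v_ss + a(s,v,v_s) on S¹ × [0,t̄]
with ψ ≥ C̃ > 0 and a(s,w,0) ≤ α|w| + β/|w| for w ≠ 0, then
sup v ≤ e^{(α+1)t̄}(√β + sup_{S¹} v⁺(·,0)). -/
theorem stmt13 (tbar α β Ct : ℝ) (htbar : 0 ≤ tbar) (hα : 0 < α) (hβ : 0 < β)
    (hCt : 0 < Ct)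
    (v ψ : ℝ → ℝ → ℝ) (a : ℝ → ℝ → ℝ → ℝ)
    (hv : ContDiff ℝ 2 (fun p : ℝ × ℝ => v p.1 p.2))
    (hper : ∀ s t, v (s + 2 * Real.pi) t = v s t)
    (hψ : ∀ s t, Ct ≤ ψ s t)
    (heq : ∀ s, ∀ t ∈ Set.Icc (0 : ℝ) tbar,
      partt v s t = ψ s t * parx (parx v) s t + a s (v s t) (parx v s t))
    (ha : ∀ s w, w ≠ 0 → a s w 0 ≤ α * |w| + β / |w|) :
    ∀ s, ∀ t ∈ Set.Icc (0 : ℝ) tbar,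
      v s t ≤ Real.exp ((α + 1) * tbar)
        * (Real.sqrt β + sSup (Set.range fun s' => max (v s' 0) 0)) := by
  have pi_pos := Real.pi_pos
  set lam := α + 1 with hlam
  have hlam0 : 0 < lam := by linarith
  have hvc : Continuous (fun p : ℝ × ℝ => v p.1 p.2) := hv.continuous
  have hper2 : ∀ t, Function.Periodic (fun s => v s t) (2 * Real.pi) := fun t s => hper s t
  have hred : ∀ s t : ℝ, ∃ s' ∈ Set.Icc (0:ℝ) (2*Real.pi), v s' t = v s t := by
    intro s t
    refine ⟨s - ⌊s / (2*Real.pi)⌋ * (2*Real.pi), ⟨?_, ?_⟩, ?_⟩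
    · exact Int.sub_floor_div_mul_nonneg s (by positivity)
    · exact (Int.sub_floor_div_mul_lt s (by positivity)).le
    · exact (hper2 t).sub_int_mul_eq _
  set m : ℝ × ℝ → ℝ := fun p => Real.exp (-(lam * p.2)) * v p.1 p.2 with hm
  have hmc : Continuous m := by
    apply Continuous.mul
    · exact Real.continuous_exp.comp (by fun_prop)
    · exact hvc
  set K : Set (ℝ × ℝ) := Set.Icc (0:ℝ) (2*Real.pi) ×ˢ Set.Icc (0:ℝ) tbar with hKdef
  have hK : IsCompact K := isCompact_Icc.prod isCompact_Icc
  have hKne : K.Nonempty := ⟨(0,0), ⟨⟨le_rfl, by positivity⟩, ⟨le_rfl, htbar⟩⟩⟩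
  obtain ⟨p0, hp0K, hp0⟩ := hK.exists_isMaxOn hKne hmc.continuousOn
  have hglob : ∀ s, ∀ t ∈ Set.Icc (0:ℝ) tbar, m (s, t) ≤ m p0 := by
    intro s t ht
    obtain ⟨s', hs', he⟩ := hred s t
    have h1 : m (s', t) = m (s, t) := by simp only [hm, he]
    rw [← h1]
    exact hp0 (Set.mk_mem_prod hs' ht)
  have hv0c : Continuous (fun s' : ℝ => max (v s' 0) 0) :=
    (hvc.comp (continuous_id.prodMk continuous_const)).max continuous_const
  have hbdd : BddAbove (Set.range fun s' => max (v s' 0) 0) := by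
    have h1 : (Set.range fun s' => max (v s' 0) 0) ⊆
        (fun s' => max (v s' 0) 0) '' Set.Icc 0 (2*Real.pi) := by
      rintro x ⟨s, rfl⟩
      obtain ⟨s', hs', he⟩ := hred s 0
      exact ⟨s', hs', by simp only [he]⟩
    exact ((isCompact_Icc.image hv0c).bddAbove).mono h1
  set L := sSup (Set.range fun s' => max (v s' 0) 0) with hL
  have hL0 : 0 ≤ L :=
    le_trans (le_max_right (v 0 0) 0) (le_csSup hbdd ⟨0, rfl⟩)
  have hsqβ : 0 < Real.sqrt β := Real.sqrt_pos.mpr hβ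
  set M := Real.sqrt β + L with hM
  have hM0 : 0 < M := by linarith
  have ht0mem : p0.2 ∈ Set.Icc (0:ℝ) tbar := hp0K.2
  have hkey : m p0 ≤ M := by
    rcases eq_or_lt_of_le ht0mem.1 with h0 | ht0pos
    · have hmp : m p0 = v p0.1 0 := by
        show Real.exp (-(lam * p0.2)) * v p0.1 p0.2 = v p0.1 0
        rw [← h0]
        norm_num
      rw [hmp]
      have h1 : v p0.1 0 ≤ max (v p0.1 0) 0 := le_max_left _ _
      have h2 : max (v p0.1 0) 0 ≤ L := le_csSup hbdd ⟨p0.1, rfl⟩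
      linarith [hsqβ.le]
    · by_contra hcon
      push_neg at hcon
      set s0 := p0.1 with hs0
      set t0 := p0.2 with ht0
      set w := v s0 t0 with hw
      have hmw : m p0 = Real.exp (-(lam * t0)) * w := rfl
      have he0 : 0 < Real.exp (-(lam * t0)) := Real.exp_pos _
      have hexple : Real.exp (-(lam * t0)) ≤ 1 :=
        Real.exp_le_one_iff.mpr (neg_nonpos.mpr (mul_nonneg hlam0.le ht0pos.le))
      have hMw : M < w := by
        by_contra hle
        push_neg at hle
        rw [hmw] at hcon
        nlinarith
      have hwpos : 0 < w := lt_trans hM0 hMw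
      have hsqw : Real.sqrt β < w := by linarith
      -- space direction
      have hsmax : ∀ s, v s t0 ≤ w := by
        intro s
        have h1 := hglob s t0 ht0mem
        rw [hmw] at h1
        exact le_of_mul_le_mul_left h1 he0
      have hf2 : ContDiff ℝ 2 (fun s => v s t0) :=
        hv.comp (contDiff_id.prodMk contDiff_const)
      have hfd : Differentiable ℝ (fun s => v s t0) :=
        hf2.differentiable (by norm_num)
      have hfd' : Differentiable ℝ (deriv (fun s => v s t0)) := by
        have h2 : ContDiff ℝ (1+1) (fun s => v s t0) := by
          rw [(by norm_num : (1+1 : WithTop ℕ∞) = 2)]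
          exact hf2
        exact ((contDiff_succ_iff_deriv.mp h2).2.2).differentiable one_ne_zero
      have hpx0 : parx v s0 t0 = 0 :=
        IsLocalMax.deriv_eq_zero (Filter.Eventually.of_forall hsmax)
      have hpxx : parx (parx v) s0 t0 ≤ 0 :=
        aux_second_deriv_nonpos hfd (hfd' s0) hsmax
      -- time direction
      have htdiff : Differentiable ℝ (fun t => v s0 t) :=
        (hv.comp (contDiff_const.prodMk contDiff_id)).differentiable (by norm_num)
      have htd : HasDerivAt (fun t => v s0 t) (partt v s0 t0) t0 :=
        (htdiff t0).hasDerivAt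
      have h1 : HasDerivAt (fun t : ℝ => -(lam * t)) (-lam) t0 := by
        exact (((hasDerivAt_id t0).const_mul lam).neg).congr_deriv (by ring)
      have hg : HasDerivAt (fun t => Real.exp (-(lam * t)) * v s0 t)
          (Real.exp (-(lam * t0)) * (-lam) * w + Real.exp (-(lam * t0)) * partt v s0 t0) t0 :=
        (h1.exp.mul htd)
      have hgmax : ∀ t ∈ Set.Icc (0:ℝ) t0,
          (fun t => Real.exp (-(lam * t)) * v s0 t) t ≤
          (fun t => Real.exp (-(lam * t)) * v s0 t) t0 := by
        intro t ht
        have := hglob s0 t ⟨ht.1, le_trans ht.2 ht0mem.2⟩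
        simpa [hm, hmw] using this
      have h0le := aux_deriv_nonneg hg ht0pos hgmax
      have hvt : lam * w ≤ partt v s0 t0 := by
        by_contra hlt
        push_neg at hlt
        nlinarith
      -- PDE
      have heq0 := heq s0 t0 ht0mem
      rw [hpx0, ← hw] at heq0
      have hwne : w ≠ 0 := ne_of_gt hwpos
      have haw := ha s0 w hwne
      rw [abs_of_pos hwpos] at haw
      have hβw : β / w < Real.sqrt β := by
        have h2 : β / w < β / Real.sqrt β := (div_lt_div_iff_of_pos_left hβ hwpos hsqβ).mpr hsqw
        rwa [Real.div_sqrt] at h2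
      have hψvss : ψ s0 t0 * parx (parx v) s0 t0 ≤ 0 :=
        mul_nonpos_of_nonneg_of_nonpos (le_trans hCt.le (hψ s0 t0)) hpxx
      rw [heq0] at hvt
      rw [hlam] at hvt
      nlinarith
  intro s t ht
  have h1 : m (s, t) ≤ M := le_trans (hglob s t ht) hkey
  have h2 : Real.exp (lam * t) * m (s, t) = v s t := by
    show Real.exp (lam * t) * (Real.exp (-(lam * t)) * v s t) = v s t
    rw [← mul_assoc, ← Real.exp_add]
    simp
  calc v s t = Real.exp (lam * t) * m (s, t) := h2.symm
    _ ≤ Real.exp (lam * t) * M :=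
        mul_le_mul_of_nonneg_left h1 (Real.exp_pos _).le
    _ ≤ Real.exp (lam * tbar) * M := by
        apply mul_le_mul_of_nonneg_right _ hM0.le
        exact Real.exp_le_exp.mpr (mul_le_mul_of_nonneg_left ht.2 hlam0.le)
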